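/- Let G be a finite non-cyclic group, let X be a finite type, and let R be a finite set of elements of FreeGroup X such that G is isomorphic to the presented group ⟨X | R⟩ and the presentation is irredundant, i.e. for every r ∈ R the presented group ⟨X | R \ {r}⟩ is not isomorphic to G. Let X' = X ⊕ R, let ι : FreeGroup X → FreeGroup X' be induced by the left inclusion, for r ∈ R write r' = ι(r) and b_r for the generator corresponding to r in the right summand, and let R' = { r'⁻¹·b_r·r'·b_r⁻² : r ∈ R } ∪ { b_r⁻¹·r'·b_r·r'⁻² : r ∈ R }. Then ⟨X' | R'⟩ is a just finite presentation of G: the presented group ⟨X' | R'⟩ is isomorphic to G, and for every s ∈ R' the presented group ⟨X' | R' \ {s}⟩ is infinite. -/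

import Mathlib

/-- The homomorphism `FreeGroup X → FreeGroup (X ⊕ R)` induced by the left inclusion. -/
def iotaHom {X : Type*} (R : Set (FreeGroup X)) :
    FreeGroup X →* FreeGroup (X ⊕ R) :=
  FreeGroup.map Sum.inl

/-- The generator `b_r` of `FreeGroup (X ⊕ R)` corresponding to `r ∈ R`. -/
def bGen {X : Type*} {R : Set (FreeGroup X)} (r : R) : FreeGroup (X ⊕ R) :=
  FreeGroup.of (Sum.inr r)

/-- The doubled relator set
`R' = { r'⁻¹·b_r·r'·b_r⁻² : r ∈ R } ∪ { b_r⁻¹·r'·b_r·r'⁻² : r ∈ R }`. -/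
def doubledRels {X : Type*} (R : Set (FreeGroup X)) : Set (FreeGroup (X ⊕ R)) :=
  (Set.range fun r : R =>
      (iotaHom R r)⁻¹ * bGen r * iotaHom R r * (bGen r ^ 2)⁻¹) ∪
  (Set.range fun r : R =>
      (bGen r)⁻¹ * iotaHom R r * bGen r * (iotaHom R r ^ 2)⁻¹)

lemma pair_triv {Γ : Type*} [Group Γ] {a b : Γ}
    (h1 : a⁻¹ * b * a * (b ^ 2)⁻¹ = 1) (h2 : b⁻¹ * a * b * (a ^ 2)⁻¹ = 1) :
    a = 1 ∧ b = 1 := by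
  rw [mul_inv_eq_one] at h1 h2
  rw [pow_two] at h1 h2
  have hba : b * a = a * (b * b) := by
    rw [← h1]; simp [mul_assoc]
  have hab : a * b = b * (a * a) := by
    rw [← h2]; simp [mul_assoc]
  have l1 : b * (b * a) = a * (b * (b * (b * b))) := by
    calc b * (b * a) = b * (a * (b * b)) := by rw [hba]
      _ = (b * a) * (b * b) := by simp [mul_assoc]
      _ = (a * (b * b)) * (b * b) := by rw [hba]
      _ = a * (b * (b * (b * b))) := by simp [mul_assoc]
  have l2 : b * (b * (b * (b * a))) = a * (b * (b * (b * (b * (b * (b * (b * b))))))) := by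
    calc b * (b * (b * (b * a)))
        = b * (b * (a * (b * (b * (b * b))))) := by rw [l1]
      _ = (b * (b * a)) * (b * (b * (b * b))) := by simp [mul_assoc]
      _ = (a * (b * (b * (b * b)))) * (b * (b * (b * b))) := by rw [l1]
      _ = a * (b * (b * (b * (b * (b * (b * (b * b))))))) := by simp [mul_assoc]
  have l3 : b * (a * a) = a * (a * (b * (b * (b * b)))) := by
    calc b * (a * a) = (b * a) * a := by simp [mul_assoc]
      _ = (a * (b * b)) * a := by rw [hba]
      _ = a * (b * (b * a)) := by simp [mul_assoc]
      _ = a * (a * (b * (b * (b * b)))) := by rw [l1]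
  have l4 : b * (a * (a * a)) = a * (a * (a * (b * (b * (b * (b * (b * (b * (b * b))))))))) := by
    calc b * (a * (a * a)) = (b * (a * a)) * a := by simp [mul_assoc]
      _ = (a * (a * (b * (b * (b * b))))) * a := by rw [l3]
      _ = a * (a * (b * (b * (b * (b * a))))) := by simp [mul_assoc]
      _ = a * (a * (a * (b * (b * (b * (b * (b * (b * (b * b))))))))) := by rw [l2]
  have l5 : a * (a * (b * b)) = a * (a * (a * (b * (b * (b * (b * (b * (b * (b * b)))))))))  := by
    calc a * (a * (b * b)) = a * (b * a) := by rw [hba]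
      _ = (a * b) * a := by simp [mul_assoc]
      _ = (b * (a * a)) * a := by rw [hab]
      _ = b * (a * (a * a)) := by simp [mul_assoc]
      _ = _ := l4
  have hb2 : b * b = a * (b * (b * (b * (b * (b * (b * (b * b))))))) := by
    have := mul_left_cancel (mul_left_cancel l5)
    exact this
  have ha : a = (b * b) * (b * (b * (b * (b * (b * (b * (b * b)))))))⁻¹ :=
    eq_mul_inv_iff_mul_eq.mpr hb2.symm
  have hcb : Commute b (b * (b * (b * (b * (b * (b * (b * b))))))) := by
    show _ = _
    simp [mul_assoc]
  have comm : a * b = b * a := by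
    rw [ha]
    exact (((Commute.refl b).mul_right (Commute.refl b)).mul_right hcb.inv_right).eq.symm
  have h7 : b * a = b * (a * a) := by rw [← hab, comm]
  have h8 : a = a * a := mul_left_cancel h7
  have ha1 : a = 1 := by
    have h9 : a * 1 = a * a := by rw [mul_one]; exact h8
    exact (mul_left_cancel h9).symm
  refine ⟨ha1, ?_⟩
  rw [ha1] at h1
  have h10 : b * 1 = b * b := by
    rw [mul_one, ← h1]; simp
  exact (mul_left_cancel h10).symm

section helpers
variable {X : Type*} {R : Set (FreeGroup X)}

lemma lift_iota {Γ : Type*} [Group Γ] (f : X ⊕ R → Γ) (w : FreeGroup X) :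
    FreeGroup.lift f (iotaHom R w) = FreeGroup.lift (fun x => f (Sum.inl x)) w := by
  have h : (FreeGroup.lift f).comp (iotaHom R) = FreeGroup.lift (fun x => f (Sum.inl x)) := by
    apply FreeGroup.ext_hom
    intro a
    simp [iotaHom, FreeGroup.map.of]
  exact DFunLike.congr_fun h w

lemma lift_bGen {Γ : Type*} [Group Γ] (f : X ⊕ R → Γ) (t : R) :
    FreeGroup.lift f (bGen t) = f (Sum.inr t) := by
  simp [bGen]

lemma mk_rel_eq_one {α : Type*} (rels : Set (FreeGroup α)) {w : FreeGroup α} (h : w ∈ rels) :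
    PresentedGroup.mk rels w = 1 :=
  (QuotientGroup.eq_one_iff _).mpr (Subgroup.subset_normalClosure h)

lemma lift_of_eq_mk {α : Type*} (rels : Set (FreeGroup α)) :
    FreeGroup.lift (PresentedGroup.of (rels := rels)) = PresentedGroup.mk rels := by
  apply FreeGroup.ext_hom
  intro a
  simp [PresentedGroup.of]

lemma toGroup_mk {α : Type*} {Γ : Type*} [Group Γ] {f : α → Γ} {rels : Set (FreeGroup α)}
    (h : ∀ r ∈ rels, FreeGroup.lift f r = 1) (w : FreeGroup α) :
    PresentedGroup.toGroup h (PresentedGroup.mk rels w) = FreeGroup.lift f w := rfl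

lemma trivial_lift {Γ : Type*} [Group Γ] (w : FreeGroup X) :
    FreeGroup.lift (fun _ : X => (1 : Γ)) w = 1 := by
  have h : FreeGroup.lift (fun _ : X => (1 : Γ)) = (1 : FreeGroup X →* Γ) := by
    apply FreeGroup.ext_hom
    intro a
    simp
  rw [h]
  rfl
end helpers

section part1
variable {X : Type*} (R : Set (FreeGroup X))

lemma gens_triv (t : R) :
    PresentedGroup.mk (doubledRels R) (iotaHom R t) = 1 ∧
    PresentedGroup.mk (doubledRels R) (bGen t) = 1 := by
  set mk := PresentedGroup.mk (doubledRels R)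
  have h1 : mk ((iotaHom R t)⁻¹ * bGen t * iotaHom R t * (bGen t ^ 2)⁻¹) = 1 :=
    mk_rel_eq_one _ (Or.inl ⟨t, rfl⟩)
  have h2 : mk ((bGen t)⁻¹ * iotaHom R t * bGen t * (iotaHom R t ^ 2)⁻¹) = 1 :=
    mk_rel_eq_one _ (Or.inr ⟨t, rfl⟩)
  simp only [map_mul, map_inv, map_pow] at h1 h2
  exact pair_triv h1 h2

lemma hfD : ∀ w ∈ doubledRels R,
    FreeGroup.lift (Sum.elim (PresentedGroup.of (rels := R)) fun _ => 1) w = 1 := by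
  intro w hw
  rcases hw with ⟨t, rfl⟩ | ⟨t, rfl⟩ <;>
  · simp only [map_mul, map_inv, map_pow, lift_iota, lift_bGen, Sum.elim_inl, Sum.elim_inr]
    rw [lift_of_eq_mk R, mk_rel_eq_one R t.2]
    simp

lemma hfU : ∀ w ∈ R,
    FreeGroup.lift (fun x => PresentedGroup.of (rels := doubledRels R) (Sum.inl x)) w = 1 := by
  intro w hw
  have h : (FreeGroup.lift fun x =>
      PresentedGroup.of (rels := doubledRels R) (Sum.inl x)) =
      (PresentedGroup.mk (doubledRels R)).comp (iotaHom R) := by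
    apply FreeGroup.ext_hom; intro a; simp [iotaHom, PresentedGroup.of]
  rw [h]
  exact (gens_triv R ⟨w, hw⟩).1

noncomputable def part1iso : PresentedGroup (doubledRels R) ≃* PresentedGroup R := by
  refine MonoidHom.toMulEquiv (PresentedGroup.toGroup (hfD R)) (PresentedGroup.toGroup (hfU R)) ?_ ?_
  · apply PresentedGroup.ext
    rintro (x | t)
    · simp [PresentedGroup.toGroup.of]
    · simp only [MonoidHom.comp_apply, MonoidHom.id_apply]
      rw [show (PresentedGroup.of (rels := doubledRels R) (Sum.inr t)) =
        PresentedGroup.mk (doubledRels R) (bGen t) from rfl]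
      rw [(gens_triv R t).2]
      simp
  · apply PresentedGroup.ext
    intro x
    simp [PresentedGroup.toGroup.of]
end part1
section Hard
variable {Q : Type*} [Group Q] (ρ : Q)


/-- modulus -/
noncomputable def mm : ℕ := 2 ^ orderOf ρ - 1

lemma two_pow_mm : (2 : ZMod (mm ρ)) ^ orderOf ρ = 1 := by
  have h1 : (1:ℕ) ≤ 2 ^ orderOf ρ := Nat.one_le_two_pow
  have : ((2 ^ orderOf ρ : ℕ) : ZMod (mm ρ)) = ((mm ρ + 1 : ℕ) : ZMod (mm ρ)) := by
    rw [mm, Nat.sub_add_cancel h1]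
  push_cast at this
  simpa using this

noncomputable def u2 (hn : 1 ≤ orderOf ρ) : (ZMod (mm ρ))ˣ :=
  ⟨2, 2 ^ (orderOf ρ - 1), by
    rw [← pow_succ', Nat.sub_add_cancel hn]; exact two_pow_mm ρ, by
    rw [← pow_succ, Nat.sub_add_cancel hn]; exact two_pow_mm ρ⟩

noncomputable def vv (hn : 1 ≤ orderOf ρ) : (ZMod (mm ρ))ˣ := (u2 ρ hn)⁻¹

lemma vv_pow_ord (hn : 1 ≤ orderOf ρ) : (vv ρ hn) ^ orderOf ρ = 1 := by
  rw [vv, inv_pow, inv_eq_one]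
  ext
  push_cast [u2]
  exact two_pow_mm ρ

lemma key_L (hn : 1 ≤ orderOf ρ) {a b : ℤ} (h : ρ ^ a = ρ ^ b) :
    (vv ρ hn) ^ a = (vv ρ hn) ^ b := by
  rw [← orderOf_dvd_sub_iff_zpow_eq_zpow] at h ⊢
  have h2 : orderOf (vv ρ hn) ∣ orderOf ρ :=
    orderOf_dvd_iff_pow_eq_one.mpr (vv_pow_ord ρ hn)
  exact dvd_trans (Int.natCast_dvd_natCast.mpr h2) h
def Idx : Type _ := Q ⧸ Subgroup.zpowers ρ

noncomputable instance : MulAction Q (Idx ρ) :=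
  inferInstanceAs (MulAction Q (Q ⧸ Subgroup.zpowers ρ))

noncomputable def sig (i : Idx ρ) : Q := Quotient.out i

lemma mk_sig (i : Idx ρ) : (QuotientGroup.mk (sig ρ i) : Q ⧸ Subgroup.zpowers ρ) = i :=
  QuotientGroup.out_eq' i

lemma smul_mk' (q a : Q) :
    (q • (QuotientGroup.mk a : Q ⧸ Subgroup.zpowers ρ) : Q ⧸ Subgroup.zpowers ρ)
      = QuotientGroup.mk (q * a) :=
  MulAction.Quotient.smul_mk _ q a

noncomputable def del (q : Q) (i : Idx ρ) : Q := (sig ρ (q • i))⁻¹ * q * sig ρ i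

lemma del_mem (q : Q) (i : Idx ρ) : del ρ q i ∈ Subgroup.zpowers ρ := by
  have h : (QuotientGroup.mk (sig ρ (q • i)) : Q ⧸ Subgroup.zpowers ρ)
      = QuotientGroup.mk (q * sig ρ i) := by
    rw [mk_sig, ← smul_mk', mk_sig]; rfl
  have := QuotientGroup.eq.mp h
  simpa [del, mul_assoc] using this

noncomputable def jj (q : Q) (i : Idx ρ) : ℤ :=
  (Subgroup.mem_zpowers_iff.mp (del_mem ρ q i)).choose

lemma jj_spec (q : Q) (i : Idx ρ) : ρ ^ (jj ρ q i) = del ρ q i :=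
  (Subgroup.mem_zpowers_iff.mp (del_mem ρ q i)).choose_spec

noncomputable def EE (hn : 1 ≤ orderOf ρ) (q : Q) (i : Idx ρ) : (ZMod (mm ρ))ˣ :=
  (vv ρ hn) ^ (jj ρ q i)

lemma EE_spec (hn : 1 ≤ orderOf ρ) (q : Q) (i : Idx ρ) {k : ℤ} (h : ρ ^ k = del ρ q i) :
    EE ρ hn q i = (vv ρ hn) ^ k :=
  key_L ρ hn ((jj_spec ρ q i).trans h.symm)

lemma EE_one (hn : 1 ≤ orderOf ρ) (i : Idx ρ) : EE ρ hn 1 i = 1 := by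
  have h : ρ ^ (0:ℤ) = del ρ 1 i := by
    rw [del, one_smul]; simp
  rw [EE_spec ρ hn 1 i h]
  simp

lemma del_mul (q q' : Q) (i : Idx ρ) :
    del ρ q (q' • i) * del ρ q' i = del ρ (q * q') i := by
  simp only [del, mul_smul]
  simp [mul_assoc]

lemma EE_mul (hn : 1 ≤ orderOf ρ) (q q' : Q) (i : Idx ρ) :
    EE ρ hn q (q' • i) * EE ρ hn q' i = EE ρ hn (q * q') i := by
  have h : ρ ^ (jj ρ q (q' • i) + jj ρ q' i) = del ρ (q * q') i := by
    rw [zpow_add, jj_spec, jj_spec, del_mul]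
  rw [EE_spec ρ hn (q * q') i h]
  rw [zpow_add]
  rfl
noncomputable abbrev Wgp : Type _ :=
  Monoid.CoprodI (fun _ : Idx ρ => Multiplicative (ZMod (mm ρ)))

noncomputable def wof (i : Idx ρ) : Multiplicative (ZMod (mm ρ)) →* Wgp ρ :=
  Monoid.CoprodI.of (M := fun _ : Idx ρ => Multiplicative (ZMod (mm ρ))) (i := i)

noncomputable def fac (e : ZMod (mm ρ)) :
    Multiplicative (ZMod (mm ρ)) →* Multiplicative (ZMod (mm ρ)) :=
  AddMonoidHom.toMultiplicative (AddMonoidHom.mulLeft e)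

lemma fac_apply (e : ZMod (mm ρ)) (x : Multiplicative (ZMod (mm ρ))) :
    fac ρ e x = Multiplicative.ofAdd (e * (Multiplicative.toAdd x)) := rfl

lemma fac_fac (e e' : ZMod (mm ρ)) (x : Multiplicative (ZMod (mm ρ))) :
    fac ρ e (fac ρ e' x) = fac ρ (e * e') x := by
  simp [fac_apply, mul_assoc]

lemma fac_one (x : Multiplicative (ZMod (mm ρ))) : fac ρ 1 x = x := by
  simp [fac_apply]

noncomputable def psi (hn : 1 ≤ orderOf ρ) (q : Q) : Wgp ρ →* Wgp ρ :=
  Monoid.CoprodI.lift (fun i => (wof ρ (q • i)).comp (fac ρ ((EE ρ hn q i : (ZMod (mm ρ))ˣ) : ZMod (mm ρ))))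

lemma psi_of (hn : 1 ≤ orderOf ρ) (q : Q) (i : Idx ρ) (x : Multiplicative (ZMod (mm ρ))) :
    psi ρ hn q (wof ρ i x) = wof ρ (q • i) (fac ρ ((EE ρ hn q i : (ZMod (mm ρ))ˣ) : ZMod (mm ρ)) x) := by
  rw [psi, wof, Monoid.CoprodI.lift_of]
  rfl

lemma psi_psi (hn : 1 ≤ orderOf ρ) (q q' : Q) (w : Wgp ρ) :
    psi ρ hn q (psi ρ hn q' w) = psi ρ hn (q * q') w := by
  have h : (psi ρ hn q).comp (psi ρ hn q') = psi ρ hn (q * q') := by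
    apply Monoid.CoprodI.ext_hom
    intro i
    refine MonoidHom.ext fun x => ?_
    change psi ρ hn q (psi ρ hn q' (wof ρ i x)) = psi ρ hn (q * q') (wof ρ i x)
    rw [psi_of, psi_of, psi_of, fac_fac]
    rw [← Units.val_mul, EE_mul ρ hn q q' i, mul_smul]
  exact DFunLike.congr_fun h w

lemma psi_one (hn : 1 ≤ orderOf ρ) (w : Wgp ρ) : psi ρ hn 1 w = w := by
  have h : psi ρ hn 1 = MonoidHom.id (Wgp ρ) := by
    apply Monoid.CoprodI.ext_hom
    intro i
    refine MonoidHom.ext fun x => ?_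
    change psi ρ hn 1 (wof ρ i x) = wof ρ i x
    rw [psi_of, EE_one]
    rw [show ((1 : (ZMod (mm ρ))ˣ) : ZMod (mm ρ)) = 1 from rfl, fac_one, one_smul]
  exact DFunLike.congr_fun h w

noncomputable def phiAut (hn : 1 ≤ orderOf ρ) (q : Q) : Wgp ρ ≃* Wgp ρ where
  toFun := psi ρ hn q
  invFun := psi ρ hn q⁻¹
  left_inv := fun w => by rw [psi_psi, inv_mul_cancel, psi_one]
  right_inv := fun w => by rw [psi_psi, mul_inv_cancel, psi_one]
  map_mul' := (psi ρ hn q).map_mul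

noncomputable def phiQ (hn : 1 ≤ orderOf ρ) : Q →* MulAut (Wgp ρ) :=
  MonoidHom.mk' (fun q => phiAut ρ hn q) (by
    intro a b
    apply MulEquiv.ext
    intro w
    change psi ρ hn (a * b) w = psi ρ hn a (psi ρ hn b w)
    rw [psi_psi])

noncomputable abbrev Gam (hn : 1 ≤ orderOf ρ) : Type _ :=
  SemidirectProduct (Wgp ρ) Q (phiQ ρ hn)

noncomputable def idx0 : Idx ρ := QuotientGroup.mk 1

lemma sig_idx0_mem : sig ρ (idx0 ρ) ∈ Subgroup.zpowers ρ := by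
  have h := mk_sig ρ (idx0 ρ)
  rw [idx0] at h
  have h2 := QuotientGroup.eq.mp h
  simp at h2; exact h2

lemma rho_inv_smul_idx0 : ρ⁻¹ • (idx0 ρ) = idx0 ρ := by
  show ρ⁻¹ • (QuotientGroup.mk 1 : Q ⧸ Subgroup.zpowers ρ) = QuotientGroup.mk 1; rw [smul_mk']
  apply QuotientGroup.eq.mpr
  simpa using Subgroup.mem_zpowers ρ

lemma EE_rho_inv (hn : 1 ≤ orderOf ρ) : EE ρ hn ρ⁻¹ (idx0 ρ) = u2 ρ hn := by
  obtain ⟨k, hk⟩ := Subgroup.mem_zpowers_iff.mp (sig_idx0_mem ρ)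
  have h : ρ ^ (-1 : ℤ) = del ρ ρ⁻¹ (idx0 ρ) := by
    rw [del, rho_inv_smul_idx0, ← hk]
    rw [← zpow_neg, show (ρ:Q)⁻¹ = ρ ^ (-1:ℤ) from (zpow_neg_one ρ).symm,
      ← zpow_add, ← zpow_add]
    ring_nf
  rw [EE_spec ρ hn _ _ h, vv]
  simp

noncomputable def w0 : Wgp ρ := wof ρ (idx0 ρ) (Multiplicative.ofAdd 1)

lemma rel_holds (hn : 1 ≤ orderOf ρ) :
    (SemidirectProduct.inr ρ : Gam ρ hn)⁻¹ * SemidirectProduct.inl (w0 ρ) *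
      SemidirectProduct.inr ρ * (SemidirectProduct.inl (w0 ρ) ^ 2)⁻¹ = 1 := by
  rw [mul_inv_eq_one]
  rw [← map_inv, ← map_pow]
  have haut := SemidirectProduct.inl_aut_inv (φ := phiQ ρ hn) ρ (w0 ρ)
  rw [← haut]
  congr 1
  have h1 : ((phiQ ρ hn ρ)⁻¹ : MulAut (Wgp ρ)) = phiQ ρ hn ρ⁻¹ := (map_inv _ ρ).symm
  rw [h1]
  change psi ρ hn ρ⁻¹ (w0 ρ) = (w0 ρ) ^ 2
  rw [w0, psi_of, rho_inv_smul_idx0, EE_rho_inv]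
  rw [fac_apply]
  have h2 : ((u2 ρ hn : (ZMod (mm ρ))ˣ) : ZMod (mm ρ)) = 2 := rfl
  rw [h2]
  have h3 : Multiplicative.toAdd (Multiplicative.ofAdd (1 : ZMod (mm ρ))) = 1 := rfl
  rw [h3]
  have h4 : (2 : ZMod (mm ρ)) * 1 = 1 + 1 := by ring
  rw [h4, ofAdd_add, map_mul, pow_two]

lemma mm_ge3 (hn2 : 2 ≤ orderOf ρ) : 3 ≤ mm ρ := by
  have : 4 ≤ 2 ^ orderOf ρ := by
    calc 4 = 2 ^ 2 := rfl
      _ ≤ 2 ^ orderOf ρ := Nat.pow_le_pow_right (by norm_num) hn2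
  rw [mm]
  omega

lemma ofAdd_one_ne_one (hm : 2 ≤ mm ρ) :
    (Multiplicative.ofAdd (1 : ZMod (mm ρ))) ≠ 1 := by
  intro h
  have h1 : (1 : ZMod (mm ρ)) = 0 := by
    have := congrArg Multiplicative.toAdd h
    simpa using this
  have h2 : ((1 : ℕ) : ZMod (mm ρ)) = 0 := by simpa using h1
  have h3 := (ZMod.natCast_eq_zero_iff 1 (mm ρ)).mp h2
  have := Nat.le_of_dvd (by norm_num) h3
  omega

lemma wgp_infinite (hm : 2 ≤ mm ρ) {i1 : Idx ρ} (hne : i1 ≠ idx0 ρ) : Infinite (Wgp ρ) := by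
  haveI : DecidableEq (Idx ρ) := Classical.decEq _
  set M := fun _ : Idx ρ => Multiplicative (ZMod (mm ρ)) with hM
  have hword : Infinite (Monoid.CoprodI.Word M) := by
    refine Infinite.of_injective (fun k : ℕ =>
      (⟨(List.range k).map (fun j =>
          ⟨if j % 2 = 0 then idx0 ρ else i1, Multiplicative.ofAdd 1⟩), ?_, ?_⟩ :
        Monoid.CoprodI.Word M)) ?_
    · intro l hl
      rw [List.mem_map] at hl
      obtain ⟨j, -, rfl⟩ := hl
      exact ofAdd_one_ne_one ρ hm
    · rw [List.isChain_map]
      rcases k with - | n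
      · simp
      · rw [List.isChain_range_succ]
        intro j hj
        dsimp only
        rcases Nat.even_or_odd j with he | ho
        · rw [Nat.even_iff] at he
          have h2 : (j + 1) % 2 = 1 := by omega
          simp only [he, h2]
          simpa using hne.symm
        · rw [Nat.odd_iff] at ho
          have h2 : (j + 1) % 2 = 0 := by omega
          simp only [ho, h2]
          simpa using hne
    · intro k1 k2 h
      have := congrArg (fun w : Monoid.CoprodI.Word M => w.toList.length) h
      simpa using this
  exact (Monoid.CoprodI.Word.equiv (M := M)).infinite_iff.mpr hword
lemma gam_gen (hn : 1 ≤ orderOf ρ) (hm : 2 ≤ mm ρ) :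
    Subgroup.closure
      (Set.range (SemidirectProduct.inr : Q →* Gam ρ hn) ∪ {SemidirectProduct.inl (w0 ρ)}) = ⊤ := by
  haveI : NeZero (mm ρ) := ⟨by omega⟩
  set S : Set (Gam ρ hn) :=
    Set.range (SemidirectProduct.inr : Q →* Gam ρ hn) ∪ {SemidirectProduct.inl (w0 ρ)} with hS
  rw [eq_top_iff]
  rintro ⟨w, q⟩ -
  rw [SemidirectProduct.mk_eq_inl_mul_inr]
  have hinr : ∀ a : Q, (SemidirectProduct.inr a : Gam ρ hn) ∈ Subgroup.closure S :=
    fun a => Subgroup.subset_closure (Or.inl ⟨a, rfl⟩)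
  have hβ : (SemidirectProduct.inl (w0 ρ) : Gam ρ hn) ∈ Subgroup.closure S :=
    Subgroup.subset_closure (Or.inr rfl)
  refine mul_mem ?_ (hinr q)
  -- step: inl of one-letter elements with generator exponent
  have hpow : ∀ (i : Idx ρ) (y : Multiplicative (ZMod (mm ρ))) (t : ℕ),
      (SemidirectProduct.inl (wof ρ i y) : Gam ρ hn) ^ t
        = SemidirectProduct.inl (wof ρ i (Multiplicative.ofAdd
            ((t : ZMod (mm ρ)) * Multiplicative.toAdd y))) := by
    intro i y t
    rw [← map_pow, ← map_pow]
    congr 1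
    rw [show y ^ t = Multiplicative.ofAdd (Multiplicative.toAdd (y ^ t)) from rfl, toAdd_pow,
      nsmul_eq_mul]
  have hone : ∀ i : Idx ρ,
      (SemidirectProduct.inl (wof ρ i (Multiplicative.ofAdd 1)) : Gam ρ hn)
        ∈ Subgroup.closure S := by
    intro i
    obtain ⟨a, rfl⟩ := QuotientGroup.mk_surjective i
    have hconj : (SemidirectProduct.inr a : Gam ρ hn) * SemidirectProduct.inl (w0 ρ) *
        (SemidirectProduct.inr a)⁻¹ ∈ Subgroup.closure S :=
      mul_mem (mul_mem (hinr a) hβ) (inv_mem (hinr a))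
    rw [← map_inv, ← SemidirectProduct.inl_aut] at hconj
    have heq : (phiQ ρ hn a) (w0 ρ)
        = wof ρ (QuotientGroup.mk a)
            (Multiplicative.ofAdd ((EE ρ hn a (idx0 ρ) : (ZMod (mm ρ))ˣ) : ZMod (mm ρ))) := by
      change psi ρ hn a (w0 ρ) = _
      rw [w0, psi_of]
      have hsm : a • idx0 ρ = QuotientGroup.mk a := by
        show a • (QuotientGroup.mk 1 : Q ⧸ Subgroup.zpowers ρ) = QuotientGroup.mk a; rw [smul_mk', mul_one]
      rw [hsm, fac_apply]
      congr 1
      simp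
    rw [heq] at hconj
    have hmem := pow_mem hconj (((EE ρ hn a (idx0 ρ))⁻¹ : (ZMod (mm ρ))ˣ).val.val)
    erw [hpow] at hmem
    have hval : ((((EE ρ hn a (idx0 ρ))⁻¹ : (ZMod (mm ρ))ˣ).val.val : ZMod (mm ρ)) *
        Multiplicative.toAdd (Multiplicative.ofAdd
          ((EE ρ hn a (idx0 ρ) : (ZMod (mm ρ))ˣ) : ZMod (mm ρ)))) = 1 := by
      rw [ZMod.natCast_val, ZMod.cast_id]
      have : Multiplicative.toAdd (Multiplicative.ofAdd
          ((EE ρ hn a (idx0 ρ) : (ZMod (mm ρ))ˣ) : ZMod (mm ρ)))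
          = ((EE ρ hn a (idx0 ρ) : (ZMod (mm ρ))ˣ) : ZMod (mm ρ)) := rfl
      rw [this, ← Units.val_mul, inv_mul_cancel, Units.val_one]
    rw [hval] at hmem
    exact hmem
  -- now general w by induction
  induction w using Monoid.CoprodI.induction_on with
  | one => simpa using one_mem _
  | of i x =>
      have hx : x = (Multiplicative.ofAdd (1 : ZMod (mm ρ))) ^ (Multiplicative.toAdd x).val := by
        rw [← ofAdd_nsmul]
        rw [nsmul_eq_mul, mul_one, ZMod.natCast_val, ZMod.cast_id]
        rfl
      rw [show (Monoid.CoprodI.of x : Wgp ρ) = wof ρ i x from rfl, hx, map_pow, map_pow]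
      exact pow_mem (hone i) _
  | mul x y hx hy =>
      rw [map_mul]
      exact mul_mem hx hy

universe uu

structure TargetData (Q : Type uu) [Group Q] (ρ : Q) where
  Γ : Type uu
  [grp : Group Γ]
  inf : Infinite Γ
  g : Q →* Γ
  β : Γ
  rel : (g ρ)⁻¹ * β * g ρ * (β ^ 2)⁻¹ = 1
  gen : Subgroup.closure (Set.range g ∪ {β}) = ⊤

attribute [instance] TargetData.grp

lemma exists_target {Q : Type*} [Group Q] (ρ : Q) (hnc : ¬IsCyclic Q) (hρ : ρ ≠ 1) :
    Nonempty (TargetData Q ρ) := by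
  rcases finite_or_infinite Q with hfin | hinf
  · -- finite case : use the twisted free-product semidirect product
    have hford : IsOfFinOrder ρ := isOfFinOrder_of_finite ρ
    have hn0 : 0 < orderOf ρ := hford.orderOf_pos
    have hn2 : 2 ≤ orderOf ρ := by
      rcases Nat.lt_or_ge (orderOf ρ) 2 with h | h
      · have h1 : orderOf ρ = 1 := by omega
        exact absurd (orderOf_eq_one_iff.mp h1) hρ
      · exact h
    have hn : 1 ≤ orderOf ρ := hn0
    have hm : 2 ≤ mm ρ := by have := mm_ge3 ρ hn2; omega
    -- a coset different from the base one
    have hzp : Subgroup.zpowers ρ ≠ ⊤ := by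
      intro h
      exact hnc ⟨⟨ρ, fun x => by show x ∈ Subgroup.zpowers ρ; rw [h]; trivial⟩⟩
    obtain ⟨q0, hq0⟩ : ∃ q0 : Q, q0 ∉ Subgroup.zpowers ρ := by
      by_contra hcon
      push_neg at hcon
      exact hzp (Subgroup.eq_top_iff' _ |>.mpr hcon)
    have hne : (QuotientGroup.mk q0 : Idx ρ) ≠ idx0 ρ := by
      intro h
      rw [idx0] at h
      have := QuotientGroup.eq.mp h
      simp only [mul_one] at this
      exact hq0 ((Subgroup.inv_mem_iff _).mp this)
    haveI hinfW : Infinite (Wgp ρ) := wgp_infinite ρ hm hne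
    haveI hinfG : Infinite (Gam ρ hn) :=
      Infinite.of_injective (SemidirectProduct.inl : Wgp ρ →* Gam ρ hn)
        SemidirectProduct.inl_injective
    exact ⟨{ Γ := Gam ρ hn
             inf := hinfG
             g := SemidirectProduct.inr
             β := SemidirectProduct.inl (w0 ρ)
             rel := rel_holds ρ hn
             gen := gam_gen ρ hn hm }⟩
  · exact ⟨{ Γ := Q
             inf := hinf
             g := MonoidHom.id Q
             β := 1
             rel := by simp
             gen := by
               rw [eq_top_iff]
               intro x _
               exact Subgroup.subset_closure (Or.inl ⟨x, rfl⟩) }⟩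
end Hard


/-- If `G` is a finite non-cyclic group with a finite irredundant presentation
`⟨X | R⟩`, then `⟨X ⊕ R | R'⟩`, with `R'` the doubled relator set, is a just finite
presentation of `G`: it presents `G`, and removing any relator gives an infinite
group. -/
theorem stmt_16 (G : Type) [Group G] [Finite G] (hG : ¬IsCyclic G)
    (X : Type) [Finite X] (R : Set (FreeGroup X)) (hR : R.Finite)
    (hpres : Nonempty (G ≃* PresentedGroup R))
    (hirr : ∀ r ∈ R, IsEmpty (PresentedGroup (R \ {r}) ≃* G)) :
    Nonempty (PresentedGroup (doubledRels R) ≃* G) ∧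
    ∀ s ∈ doubledRels R, Infinite (PresentedGroup (doubledRels R \ {s})) := by
  classical
  obtain ⟨e⟩ := hpres
  constructor
  · exact ⟨(part1iso R).trans e.symm⟩
  · intro s hs
    rcases hs with ⟨r₀, rfl⟩ | ⟨r₀, rfl⟩
    · -- a relator of the first family was removed : surject onto `Multiplicative ℤ`
      set f : X ⊕ R → Multiplicative ℤ :=
        Sum.elim (fun _ => 1)
          (fun t => if (t : FreeGroup X) = (r₀ : FreeGroup X)
            then Multiplicative.ofAdd (1 : ℤ) else 1) with hf
      have hiota : ∀ w : FreeGroup X, FreeGroup.lift f (iotaHom R w) = 1 := by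
        intro w
        rw [lift_iota]
        exact trivial_lift w
      have hkill : ∀ w ∈ doubledRels R \
          {(iotaHom R ↑r₀)⁻¹ * bGen r₀ * iotaHom R ↑r₀ * (bGen r₀ ^ 2)⁻¹},
          FreeGroup.lift f w = 1 := by
        rintro w ⟨hw, hws⟩
        rcases hw with ⟨t, rfl⟩ | ⟨t, rfl⟩
        · by_cases ht : t = r₀
          · subst ht
            exact absurd rfl hws
          · have hval : (t : FreeGroup X) ≠ (r₀ : FreeGroup X) :=
              fun hc => ht (Subtype.ext hc)
            simp only [map_mul, map_inv, map_pow, lift_bGen, hiota]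
            rw [show f (Sum.inr t) = 1 from if_neg hval]
            simp
        · simp only [map_mul, map_inv, map_pow, lift_bGen, hiota]
          simp
      have hsurj : Function.Surjective (PresentedGroup.toGroup hkill) := by
        intro γ
        refine ⟨(PresentedGroup.mk _ (bGen r₀)) ^ (Multiplicative.toAdd γ), ?_⟩
        rw [map_zpow, toGroup_mk, lift_bGen]
        rw [show f (Sum.inr r₀) = Multiplicative.ofAdd (1:ℤ) from if_pos rfl]
        apply Multiplicative.toAdd.injective
        rw [toAdd_zpow]
        simp
      exact Infinite.of_surjective _ hsurj
    · -- a relator of the second family was removed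
      set ρ : PresentedGroup (R \ {(r₀ : FreeGroup X)}) :=
        PresentedGroup.mk _ (r₀ : FreeGroup X) with hρdef
      have hπk : ∀ w ∈ R \ {(r₀ : FreeGroup X)},
          FreeGroup.lift (PresentedGroup.of (rels := R)) w = 1 := by
        intro w hw
        rw [lift_of_eq_mk]
        exact mk_rel_eq_one R hw.1
      have hπsurj : Function.Surjective (PresentedGroup.toGroup hπk) := by
        intro y
        induction y using PresentedGroup.induction_on with
        | _ w => exact ⟨PresentedGroup.mk _ w, by rw [toGroup_mk, lift_of_eq_mk]⟩
      have hQnc : ¬IsCyclic (PresentedGroup (R \ {(r₀ : FreeGroup X)})) := by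
        intro hc
        haveI := hc
        haveI h1 : IsCyclic (PresentedGroup R) :=
          isCyclic_of_surjective _ hπsurj
        have h2 : IsCyclic G := isCyclic_of_surjective e.symm e.symm.surjective
        exact hG h2
      have hρ1 : ρ ≠ 1 := by
        intro hρeq
        have hmem2 : (r₀ : FreeGroup X) ∈
            Subgroup.normalClosure (R \ {(r₀ : FreeGroup X)}) :=
          (QuotientGroup.eq_one_iff _).mp hρeq
        have hncl : Subgroup.normalClosure (R \ {(r₀ : FreeGroup X)})
            = Subgroup.normalClosure R := by
          apply le_antisymm
          · exact Subgroup.normalClosure_mono Set.diff_subset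
          · apply Subgroup.normalClosure_le_normal
            intro t ht
            by_cases h : t = (r₀ : FreeGroup X)
            · subst h; exact hmem2
            · exact Subgroup.subset_normalClosure ⟨ht, h⟩
        have hiso : PresentedGroup (R \ {(r₀ : FreeGroup X)}) ≃* G :=
          (QuotientGroup.quotientMulEquivOfEq hncl).trans e.symm
        exact (hirr ↑r₀ r₀.2).false hiso
      obtain ⟨d⟩ := exists_target ρ hQnc hρ1
      set f : X ⊕ R → d.Γ :=
        Sum.elim (fun x => d.g (PresentedGroup.of x))
          (fun t => if (t : FreeGroup X) = (r₀ : FreeGroup X) then d.β else 1) with hf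
      have hiota2 : ∀ w : FreeGroup X,
          FreeGroup.lift f (iotaHom R w) = d.g (PresentedGroup.mk _ w) := by
        intro w
        rw [lift_iota]
        have hcomp : (FreeGroup.lift fun x => f (Sum.inl x))
            = d.g.comp (PresentedGroup.mk (R \ {(r₀ : FreeGroup X)})) := by
          apply FreeGroup.ext_hom
          intro a
          simp only [FreeGroup.lift_apply_of, MonoidHom.comp_apply]
          rfl
        rw [hcomp]
        rfl
      have hkill : ∀ w ∈ doubledRels R \
          {(bGen r₀)⁻¹ * iotaHom R ↑r₀ * bGen r₀ * (iotaHom R ↑r₀ ^ 2)⁻¹},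
          FreeGroup.lift f w = 1 := by
        rintro w ⟨hw, hws⟩
        rcases hw with ⟨t, rfl⟩ | ⟨t, rfl⟩
        · simp only [map_mul, map_inv, map_pow, lift_bGen, hiota2]
          by_cases h : (t : FreeGroup X) = (r₀ : FreeGroup X)
          · rw [show f (Sum.inr t) = d.β from if_pos h]
            rw [show PresentedGroup.mk (R \ {(r₀ : FreeGroup X)}) (t : FreeGroup X) = ρ
              from by rw [h]]
            exact d.rel
          · rw [show f (Sum.inr t) = 1 from if_neg h]
            simp
        · by_cases h : (t : FreeGroup X) = (r₀ : FreeGroup X)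
          · exfalso
            apply hws
            have ht : t = r₀ := Subtype.ext h
            rw [ht]
            rfl
          · simp only [map_mul, map_inv, map_pow, lift_bGen, hiota2]
            have hone : PresentedGroup.mk (R \ {(r₀ : FreeGroup X)}) (t : FreeGroup X) = 1 :=
              mk_rel_eq_one _ ⟨t.2, h⟩
            rw [hone]
            simp
      have hsurj : Function.Surjective (PresentedGroup.toGroup hkill) := by
        intro γ
        have hle : Subgroup.closure (Set.range d.g ∪ {d.β})
            ≤ (PresentedGroup.toGroup hkill).range := by
          rw [Subgroup.closure_le]
          rintro x (⟨q, rfl⟩ | hx)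
          · obtain ⟨w, rfl⟩ := PresentedGroup.mk_surjective _ q
            exact ⟨PresentedGroup.mk _ (iotaHom R w), by rw [toGroup_mk]; exact hiota2 w⟩
          · rw [Set.mem_singleton_iff] at hx
            subst hx
            refine ⟨PresentedGroup.mk _ (bGen r₀), ?_⟩
            rw [toGroup_mk, lift_bGen]
            exact if_pos rfl
        have : γ ∈ (PresentedGroup.toGroup hkill).range := by
          apply hle
          rw [d.gen]
          trivial
        exact this
      haveI := d.inf
      exact Infinite.of_surjective _ hsurj
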